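/- Suppose the period τ is odd. Then the distance to the target form satisfies the bound | Σ_{i=1}^{(τ−1)/2} (1/2)·ln((√N + P_i)/(√N − P_i)) − (1/4)·ln(p_{2τ−1} + q_{2τ−1}√N) | ≤ (1/4)·ln(4N). -/

import Mathlib

set_option maxHeartbeats 1000000

private lemma cfAux_floor_eq {x u v : ℝ} {c d : ℤ} (hu : 1 < u) (hv : 1 < v)
    (h1 : x = c + 1/u) (h2 : x = d + 1/v) : u = v := by
  have hu0 : (0:ℝ) < 1/u := by positivity
  have hv0 : (0:ℝ) < 1/v := by positivity
  have hu1 : 1/u < 1 := by rw [div_lt_one (by linarith)]; linarith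
  have hv1 : 1/v < 1 := by rw [div_lt_one (by linarith)]; linarith
  have hcd : c = d := by
    have h3 : (c:ℝ) < x := by rw [h1]; linarith
    have h4 : x < c + 1 := by rw [h1]; linarith
    have h5 : (d:ℝ) < x := by rw [h2]; linarith
    have h6 : x < d + 1 := by rw [h2]; linarith
    have : (c:ℝ) < d + 1 := lt_trans h3 h6
    have : (d:ℝ) < c + 1 := lt_trans h5 h4
    have h7 : c < d + 1 := by exact_mod_cast ‹(c:ℝ) < d + 1›
    have h8 : d < c + 1 := by exact_mod_cast ‹(d:ℝ) < c + 1›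
    omega
  have : 1/u = 1/v := by
    have := h1.symm.trans h2
    rw [hcd] at this
    linarith
  field_simp at this
  linarith

private lemma cfAux_irr_eq {s : ℝ} (hirr : Irrational s) {P₁ Q₁ P₂ Q₂ : ℤ}
    (hQ₁ : Q₁ ≠ 0) (hQ₂ : Q₂ ≠ 0)
    (h : ((P₁:ℝ) + s)/(Q₁:ℝ) = ((P₂:ℝ) + s)/(Q₂:ℝ)) : P₁ = P₂ ∧ Q₁ = Q₂ := by
  have hQ₁' : (Q₁:ℝ) ≠ 0 := Int.cast_ne_zero.mpr hQ₁
  have hQ₂' : (Q₂:ℝ) ≠ 0 := Int.cast_ne_zero.mpr hQ₂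
  rw [div_eq_div_iff hQ₁' hQ₂'] at h
  have hQQ : Q₁ = Q₂ := by
    by_contra hne
    have hne' : ((Q₂:ℝ) - Q₁) ≠ 0 := by
      intro h0
      apply hne
      have : (Q₁:ℝ) = Q₂ := by linarith
      exact_mod_cast this
    have : s = ((P₂ * Q₁ - P₁ * Q₂ : ℤ) : ℝ) / ((Q₂ - Q₁ : ℤ) : ℝ) := by
      push_cast
      rw [eq_div_iff (by push_cast at hne' ⊢; exact hne')]
      ring_nf
      ring_nf at h
      linarith
    exact (hirr.ne_rat ((P₂ * Q₁ - P₁ * Q₂ : ℤ) / ((Q₂ - Q₁ : ℤ)))) (by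
      rw [this, Rat.cast_div]; push_cast; ring)
  refine ⟨?_, hQQ⟩
  have : (P₁:ℝ) * Q₂ = P₂ * Q₁ := by
    have hq : (Q₁:ℝ) = Q₂ := by exact_mod_cast hQQ
    rw [hq] at h ⊢
    nlinarith [h]
  have : P₁ * Q₂ = P₂ * Q₁ := by exact_mod_cast this
  rw [hQQ] at this
  exact mul_right_cancel₀ hQ₂ this

theorem stmt_19
    (N : ℕ) (hN : 0 < N) (hNsq : ¬ IsSquare N)
    (a P Q : ℤ → ℤ)
    (hP0 : P 0 = 0) (hQ0 : Q 0 = 1)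
    (ha : ∀ m : ℤ, 0 ≤ m → a m = ⌊((P m : ℝ) + Real.sqrt N) / (Q m : ℝ)⌋)
    (hPrec : ∀ m : ℤ, 0 ≤ m → P (m + 1) = a m * Q m - P m)
    (hQrec : ∀ m : ℤ, 0 ≤ m → Q (m + 1) * Q m = (N : ℤ) - P (m + 1) ^ 2)
    (τ : ℕ) (hτ : 0 < τ)
    (hper : ∀ n : ℤ, 1 ≤ n → a (n + τ) = a n)
    (hmin : ∀ τ' : ℕ, 0 < τ' → (∀ n : ℤ, 1 ≤ n → a (n + τ') = a n) → τ ≤ τ')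
    (p q : ℤ → ℤ)
    (hp1 : p (-1) = 1) (hp0 : p 0 = a 0)
    (hq1 : q (-1) = 0) (hq0 : q 0 = 1)
    (hprec : ∀ m : ℤ, 1 ≤ m → p m = a m * p (m - 1) + p (m - 2))
    (hqrec : ∀ m : ℤ, 1 ≤ m → q m = a m * q (m - 1) + q (m - 2))
    (hτodd : Odd τ)
    :
    |(∑ i ∈ Finset.range ((τ - 1) / 2),
        (1 / 2 : ℝ) * Real.log ((Real.sqrt N + (P ((i : ℤ) + 1) : ℝ))
          / (Real.sqrt N - (P ((i : ℤ) + 1) : ℝ))))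
      - (1 / 4 : ℝ) * Real.log ((p (2 * (τ : ℤ) - 1) : ℝ) + (q (2 * (τ : ℤ) - 1) : ℝ) * Real.sqrt N)|
      ≤ (1 / 4 : ℝ) * Real.log (4 * (N : ℝ)) := by
  set s : ℝ := Real.sqrt N with hsdef
  have hirr : Irrational s := irrational_sqrt_natCast_iff.mpr hNsq
  have hs0 : 0 < s := Real.sqrt_pos.mpr (by exact_mod_cast hN)
  have hs2 : s * s = (N : ℝ) := Real.mul_self_sqrt (Nat.cast_nonneg N)
  -- the complete quotients
  set ξ : ℤ → ℝ := fun m => ((P m : ℝ) + s) / (Q m : ℝ) with hξdef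
  set η : ℤ → ℝ := fun m => (s + (P m : ℝ)) / (Q (m-1) : ℝ) with hηdef
  have hξ : ∀ m, ξ m = ((P m : ℝ) + s) / (Q m : ℝ) := fun _ => rfl
  have hη : ∀ m, η m = (s + (P m : ℝ)) / (Q (m-1) : ℝ) := fun _ => rfl
  -- a 0 is the floor of s
  have ha0 : a 0 = ⌊s⌋ := by
    have := ha 0 le_rfl
    rw [hP0, hQ0] at this
    simpa using this
  have hfloor_lt : (⌊s⌋ : ℝ) < s := by
    rcases lt_or_eq_of_le (Int.floor_le s) with h | h
    · exact h
    · exact absurd h.symm (hirr.ne_int ⌊s⌋)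
  have hξirr : ∀ m : ℤ, Q m ≠ 0 → Irrational (ξ m) := by
    intro m hQm
    have h1 : Irrational ((P m : ℝ) + s) := (hirr.intCast_add (P m))
    simpa [hξ] using h1.div_intCast hQm
  -- P 1 and Q 1
  have hP1 : P 1 = a 0 := by have := hPrec 0 le_rfl; rw [hP0, hQ0] at this; simpa using this
  have hQ1 : Q 1 = (N : ℤ) - (a 0)^2 := by
    have := hQrec 0 le_rfl
    rw [hQ0] at this
    simpa [hP1] using this
  have hQ1pos : 1 ≤ Q 1 := by
    have h1 : ((a 0 : ℝ))^2 < (N:ℝ) := by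
      rw [ha0]
      have h0 : (0:ℝ) ≤ (⌊s⌋:ℝ) := by exact_mod_cast Int.floor_nonneg.mpr hs0.le
      nlinarith [hfloor_lt, h0, hs2]
    have : ((a 0)^2 : ℤ) < (N : ℤ) := by exact_mod_cast h1
    omega
  -- the fundamental invariant: reducedness
  have main : ∀ m : ℤ, 1 ≤ m →
      (1 ≤ Q m ∧ (Q m : ℝ) < s + P m ∧ (P m : ℝ) < s ∧ s - P m < Q m) := by
    refine fun m hm => Int.le_induction (motive := fun m _ => 1 ≤ Q m ∧ (Q m : ℝ) < s + P m ∧ (P m : ℝ) < s ∧ s - P m < Q m) ?_ ?_ m hm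
    ·
      refine ⟨hQ1pos, ?_, ?_, ?_⟩
      · have hQ1r : (Q 1 : ℝ) = (s - a 0) * (s + a 0) := by
          rw [hQ1]; push_cast; nlinarith [hs2]
        have h1 : s - (a 0 : ℝ) < 1 := by rw [ha0]; have := Int.lt_floor_add_one s; push_cast; linarith
        have h2 : (0:ℝ) < s + a 0 := by
          have : (0:ℝ) ≤ (a 0 : ℝ) := by rw [ha0]; exact_mod_cast Int.floor_nonneg.mpr hs0.le
          linarith
        rw [hP1, hQ1r]
        nlinarith [mul_pos (by linarith : (0:ℝ) < 1 - (s - (a 0 : ℝ))) h2]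
      · rw [hP1, ha0]; exact hfloor_lt
      · have h1 : s - (P 1 : ℝ) < 1 := by rw [hP1, ha0]; have := Int.lt_floor_add_one s; push_cast; linarith
        have : (1:ℝ) ≤ (Q 1 : ℝ) := by exact_mod_cast hQ1pos
        linarith
    · intro m hm1 ih
      obtain ⟨iQ, iup, iPs, idn⟩ := ih
      have hQm0 : (0:ℝ) < (Q m : ℝ) := by exact_mod_cast (by omega : (0:ℤ) < Q m)
      have hxi1 : 1 < ξ m := by
        rw [hξ, lt_div_iff₀ hQm0]; linarith
      have ham : a m = ⌊ξ m⌋ := ha m (by omega)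
      have hxiirr : Irrational (ξ m) := hξirr m (by omega)
      have hfl : (a m : ℝ) < ξ m := by
        rw [ham]
        rcases lt_or_eq_of_le (Int.floor_le (ξ m)) with h | h
        · exact h
        · exact absurd h.symm (hxiirr.ne_int ⌊ξ m⌋)
      have hfu : ξ m < a m + 1 := by rw [ham]; exact Int.lt_floor_add_one (ξ m)
      have ham1 : 1 ≤ a m := by
        rw [ham]
        exact Int.le_floor.mpr (by exact_mod_cast hxi1.le)
      -- the new P
      have hP' : P (m+1) = a m * Q m - P m := hPrec m (by omega)
      have hsP'lo : 0 < s - (P (m+1) : ℝ) := by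
        have : (ξ m - a m) * (Q m : ℝ) = s - (P (m+1)) := by
          rw [hξ, hP']; push_cast; field_simp; ring
        nlinarith [hfl]
      have hsP'hi : s - (P (m+1) : ℝ) < (Q m : ℝ) := by
        have : (ξ m - a m) * (Q m : ℝ) = s - (P (m+1)) := by
          rw [hξ, hP']; push_cast; field_simp; ring
        nlinarith [hfu]
      have hsplus : (Q m : ℝ) < s + (P (m+1) : ℝ) := by
        have h1 : s + (P (m+1) : ℝ) = (a m : ℝ) * Q m + (s - P m) := by
          rw [hP']; push_cast; ring
        have h2 : (Q m : ℝ) ≤ (a m : ℝ) * Q m := by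
          nlinarith [(by exact_mod_cast ham1 : (1:ℝ) ≤ (a m : ℝ))]
        linarith
      -- the new Q
      have hQ' : (Q (m+1) : ℝ) * (Q m : ℝ) = (s - P (m+1)) * (s + P (m+1)) := by
        have := hQrec m (by omega)
        have hcast : ((Q (m+1) : ℝ)) * (Q m : ℝ) = (N : ℝ) - (P (m+1) : ℝ)^2 := by
          exact_mod_cast congrArg (fun z : ℤ => (z : ℝ)) this
        nlinarith [hs2, hcast]
      have hQ'pos : 1 ≤ Q (m+1) := by
        have h1 : (0:ℝ) < (Q (m+1) : ℝ) * (Q m : ℝ) := by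
          rw [hQ']
          have : (0:ℝ) < s + (P (m+1)) := by linarith
          nlinarith
        have h2 : (0:ℝ) < (Q (m+1) : ℝ) := by
          rcases mul_pos_iff.mp h1 with ⟨h, _⟩ | ⟨_, h⟩
          · exact h
          · linarith
        have : (0:ℤ) < Q (m+1) := by exact_mod_cast h2
        omega
      have hQ'r : (0:ℝ) < (Q (m+1) : ℝ) := by exact_mod_cast (by omega : (0:ℤ) < Q (m+1))
      refine ⟨hQ'pos, ?_, by linarith, ?_⟩
      · nlinarith [hQ', hsP'hi, hQ'r, hQm0, hsP'lo, hsplus]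
      · nlinarith [hQ', hsplus, hsP'lo, hQ'r, hQm0]
  -- derived positivity facts
  have hQpos : ∀ m : ℤ, 0 ≤ m → 1 ≤ Q m := by
    intro m hm
    rcases eq_or_lt_of_le hm with h | h
    · rw [← h, hQ0]
    · exact (main m (by omega)).1
  have hQR : ∀ m : ℤ, 0 ≤ m → (0:ℝ) < (Q m : ℝ) := by
    intro m hm
    exact_mod_cast (by have := hQpos m hm; omega : (0:ℤ) < Q m)
  have hxigt : ∀ m : ℤ, 1 ≤ m → 1 < ξ m := by
    intro m hm
    obtain ⟨iQ, iup, _, _⟩ := main m hm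
    rw [hξ, lt_div_iff₀ (hQR m (by omega))]; linarith
  have hnumpos : ∀ m : ℤ, 1 ≤ m → (0:ℝ) < (P m : ℝ) + s := by
    intro m hm
    obtain ⟨iQ, iup, _, _⟩ := main m hm
    have := hQR m (by omega)
    linarith
  have hQrecR : ∀ m : ℤ, 0 ≤ m → (Q (m+1) : ℝ) * (Q m : ℝ) = (s - P (m+1)) * (s + P (m+1)) := by
    intro m hm
    have h0 := hQrec m hm
    have hcast : ((Q (m+1) : ℝ)) * (Q m : ℝ) = (N : ℝ) - (P (m+1) : ℝ)^2 := by
      exact_mod_cast congrArg (fun z : ℤ => (z : ℝ)) h0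
    linear_combination hcast - hs2
  -- recursion for ξ
  have hxirec : ∀ m : ℤ, 1 ≤ m → ξ m = a m + 1 / ξ (m+1) := by
    intro m hm
    obtain ⟨iQ, iup, iPs, idn⟩ := main m hm
    obtain ⟨iQ', iup', iPs', idn'⟩ := main (m+1) (by omega)
    have hQm := hQR m (by omega)
    have hQm' := hQR (m+1) (by omega)
    have hnum' := hnumpos (m+1) (by omega)
    have h1 : 1 / ξ (m+1) = (s - P (m+1)) / (Q m : ℝ) := by
      rw [hξ, one_div, inv_div, div_eq_div_iff (ne_of_gt hnum') (ne_of_gt hQm)]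
      linear_combination hQrecR m (by omega)
    rw [h1, hξ, hPrec m (by omega)]
    push_cast
    field_simp
    ring
  -- η facts
  have hetaQ : ∀ m : ℤ, 1 ≤ m → η m * (s - (P m : ℝ)) = (Q m : ℝ) := by
    intro m hm
    have h0 := hQrecR (m-1) (by omega)
    rw [sub_add_cancel] at h0
    rw [hη, div_mul_eq_mul_div, div_eq_iff (ne_of_gt (hQR (m-1) (by omega)))]
    linear_combination -h0
  have hetagt : ∀ m : ℤ, 1 ≤ m → 1 < η m := by
    intro m hm
    obtain ⟨iQ, iup, iPs, idn⟩ := main m hm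
    have h0 := hetaQ m hm
    have hsp : (0:ℝ) < s - P m := by linarith
    nlinarith [h0]
  have hetarec : ∀ m : ℤ, 1 ≤ m → η (m+1) = a m + 1 / η m := by
    intro m hm
    obtain ⟨iQ, iup, iPs, idn⟩ := main m hm
    have hsp : (0:ℝ) < s - P m := by linarith
    have heta0 : (0:ℝ) < η m := lt_trans one_pos (hetagt m hm)
    have h1 : 1 / η m = (s - P m) / (Q m : ℝ) := by
      rw [div_eq_div_iff (ne_of_gt heta0) (ne_of_gt (hQR m (by omega)))]
      linear_combination -(hetaQ m hm)
    rw [h1, hη, add_sub_cancel_right, hPrec m (by omega)]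
    push_cast
    field_simp
    ring
  have hτZ : (1:ℤ) ≤ (τ:ℤ) := by exact_mod_cast hτ
  -- upper bound for ξ
  have hxiub : ∀ m : ℤ, 1 ≤ m → ξ m < 2*s := by
    intro m hm
    obtain ⟨iQ, iup, iPs, idn⟩ := main m hm
    rw [hξ, div_lt_iff₀ (hQR m (by omega))]
    have h1 : (1:ℝ) ≤ (Q m : ℝ) := by exact_mod_cast iQ
    nlinarith
  -- inverse recursion
  have hxinv : ∀ m : ℤ, 1 ≤ m → ξ (m+1) = 1/(ξ m - (a m : ℝ)) := by
    intro m hm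
    have h := hxirec m hm
    have h1 : 1 < ξ (m+1) := hxigt (m+1) (by omega)
    have h2 : ξ m - (a m : ℝ) = 1/ξ (m+1) := by linarith
    rw [h2, one_div_one_div]
  -- consecutive products are large
  have hpair : ∀ m : ℤ, 1 ≤ m → 2 < ξ m * ξ (m+1) := by
    intro m hm
    have h := hxirec m hm
    have h1 : 1 < ξ (m+1) := hxigt (m+1) (by omega)
    have ham1 : (1:ℝ) ≤ (a m : ℝ) := by
      have : 1 ≤ a m := by
        rw [ha m (by omega)]
        exact Int.le_floor.mpr (by exact_mod_cast (hxigt m hm).le)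
      exact_mod_cast this
    have he : ξ m * ξ (m+1) = (a m : ℝ) * ξ (m+1) + 1 := by
      rw [h]; field_simp
    nlinarith
  -- contraction step
  have habs : ∀ m : ℤ, 1 ≤ m →
      |ξ m - ξ (m+τ)| * (ξ (m+1) * ξ (m+τ+1)) = |ξ (m+1) - ξ (m+τ+1)| := by
    intro m hm
    have e : (ξ m - ξ (m+τ)) * (ξ (m+1) * ξ (m+τ+1)) = ξ (m+τ+1) - ξ (m+1) := by
      rw [hxirec m hm, hxirec (m+τ) (by omega), hper m hm]
      have h1 : ξ (m+1) ≠ 0 := by have := hxigt (m+1) (by omega); linarith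
      have h2 : ξ (m+τ+1) ≠ 0 := by have := hxigt (m+τ+1) (by omega); linarith
      field_simp
      ring
    have hp : (0:ℝ) < ξ (m+1) * ξ (m+τ+1) := by
      have := hxigt (m+1) (by omega); have := hxigt (m+τ+1) (by omega); nlinarith
    calc |ξ m - ξ (m+τ)| * (ξ (m+1) * ξ (m+τ+1))
        = |(ξ m - ξ (m+τ)) * (ξ (m+1) * ξ (m+τ+1))| := by
          rw [abs_mul, abs_of_pos hp]
      _ = |ξ (m+τ+1) - ξ (m+1)| := by rw [e]
      _ = |ξ (m+1) - ξ (m+τ+1)| := abs_sub_comm _ _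
  have hfour : ∀ m : ℤ, 1 ≤ m → 4*|ξ m - ξ (m+τ)| ≤ |ξ (m+2) - ξ (m+2+τ)| := by
    intro m hm
    have h1 := habs m hm
    have h2 := habs (m+1) (by omega)
    have i1 : m + τ + 1 = m + 1 + τ := by ring
    have i2 : m + 1 + τ + 1 = m + 2 + τ := by ring
    have i3 : m + 1 + 1 = m + 2 := by ring
    rw [i1] at h1
    rw [i2, i3] at h2
    have hA : 2 < ξ (m+1) * ξ (m+2) := by
      have := hpair (m+1) (by omega); rwa [i3] at this
    have hB : 2 < ξ (m+1+τ) * ξ (m+2+τ) := by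
      have := hpair (m+1+τ) (by omega)
      have i4 : m + 1 + τ + 1 = m + 2 + τ := by ring
      rwa [i4] at this
    have hD : 0 ≤ |ξ m - ξ (m+τ)| := abs_nonneg _
    have hcomb : |ξ (m+2) - ξ (m+2+τ)|
        = |ξ m - ξ (m+τ)| * ((ξ (m+1) * ξ (m+2)) * (ξ (m+1+τ) * ξ (m+2+τ))) := by
      rw [← h2, ← h1]; ring
    nlinarith [mul_nonneg hD (by nlinarith : (0:ℝ) ≤ (ξ (m+1) * ξ (m+2)) * (ξ (m+1+τ) * ξ (m+2+τ)) - 4)]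
  -- iterating the contraction
  have hiter : ∀ n : ℕ, ∀ m : ℤ, 1 ≤ m → |ξ m - ξ (m+τ)| * 4^n ≤ 2*s := by
    intro n
    induction n with
    | zero =>
      intro m hm
      have u1 := hxigt m hm
      have u2 := hxigt (m+τ) (by omega)
      have u3 := hxiub m hm
      have u4 := hxiub (m+τ) (by omega)
      simp only [pow_zero, mul_one]
      exact abs_le.mpr ⟨by linarith, by linarith⟩
    | succ n ih =>
      intro m hm
      have h4 := hfour m hm
      have ihm := ih (m+2) (by omega)
      have : |ξ m - ξ (m+τ)| * 4^(n+1) = (4*|ξ m - ξ (m+τ)|) * 4^n := by ring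
      rw [this]
      calc (4*|ξ m - ξ (m+τ)|) * 4^n ≤ |ξ (m+2) - ξ (m+2+τ)| * 4^n := by
            have : (0:ℝ) ≤ (4:ℝ)^n := by positivity
            exact mul_le_mul_of_nonneg_right h4 this
        _ ≤ 2*s := ihm
  -- periodicity of ξ
  have hper1 : ξ (1+τ) = ξ 1 := by
    by_contra hne
    have hpos : 0 < |ξ 1 - ξ (1+τ)| := abs_pos.mpr (sub_ne_zero.mpr (fun h => hne (by linarith [h])))
    obtain ⟨n, hn⟩ := pow_unbounded_of_one_lt ((2*s)/|ξ 1 - ξ (1+τ)|) (by norm_num : (1:ℝ) < 4)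
    have h1 := hiter n 1 le_rfl
    rw [div_lt_iff₀ hpos] at hn
    nlinarith
  have hxiper : ∀ m : ℤ, 1 ≤ m → ξ (m+τ) = ξ m := by
    refine fun m hm => Int.le_induction (motive := fun m _ => ξ (m+τ) = ξ m) hper1 ?_ m hm
    intro m hm ih
    have i1 : m + 1 + τ = (m + τ) + 1 := by ring
    rw [i1, hxinv (m+τ) (by omega), hper m hm, ih, ← hxinv m hm]
  have hPQper : ∀ m : ℤ, 1 ≤ m → P (m+τ) = P m ∧ Q (m+τ) = Q m := by
    intro m hm
    have h := hxiper m hm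
    rw [hξ, hξ] at h
    exact cfAux_irr_eq hirr
      (by have := hQpos (m+τ) (by omega); omega)
      (by have := hQpos m (by omega); omega) h
  -- Q τ = 1
  have hQτ : Q (τ:ℤ) = 1 := by
    have h0 := hQrec (τ:ℤ) (by omega)
    have h1 : P ((τ:ℤ)+1) = P 1 := by
      have := (hPQper 1 le_rfl).1; rwa [add_comm] at this
    have h2 : Q ((τ:ℤ)+1) = Q 1 := by
      have := (hPQper 1 le_rfl).2; rwa [add_comm] at this
    rw [h1, h2, hP1] at h0
    have h3 : Q 1 * Q (τ:ℤ) = Q 1 * 1 := by rw [h0, hQ1]; ring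
    exact mul_left_cancel₀ (by omega) h3
  -- base of the symmetry comparison
  have hQ1R : (Q 1 : ℝ) = (s - (a 0:ℝ)) * (s + (a 0:ℝ)) := by
    have h := hQrecR 0 le_rfl
    rw [zero_add, hP1] at h
    have h0 : ((Q 0 : ℤ) : ℝ) = 1 := by rw [hQ0]; norm_num
    rw [h0, mul_one] at h
    exact h
  have hnum1 : (0:ℝ) < (P 1 : ℝ) + s := hnumpos 1 le_rfl
  have hx1 : s + (a 0:ℝ) = 2*(a 0:ℝ) + 1/ξ 1 := by
    have h1 : 1/ξ 1 = s - (a 0:ℝ) := by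
      rw [hξ, one_div, inv_div, div_eq_iff (ne_of_gt hnum1), hP1]
      linear_combination hQ1R
    rw [h1]; ring
  have hPτ1 : P ((τ:ℤ)+1) = a 0 := by
    have := (hPQper 1 le_rfl).1; rw [add_comm] at this; rw [this, hP1]
  have hx2 : s + (a 0:ℝ) = (a (τ:ℤ) : ℝ) + 1/η (τ:ℤ) := by
    have h := hetarec (τ:ℤ) hτZ
    have h2 : η ((τ:ℤ)+1) = s + (a 0:ℝ) := by
      rw [hη, add_sub_cancel_right, hPτ1, hQτ]
      norm_num
    rw [← h2, h]
  have hbase : ξ 1 = η (τ:ℤ) := by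
    exact cfAux_floor_eq (c := 2 * a 0) (hxigt 1 le_rfl) (hetagt (τ:ℤ) hτZ)
      (by rw [hx1]; push_cast; ring) hx2
  -- the palindrome symmetry
  have hsym : ∀ i : ℤ, 1 ≤ i → i ≤ (τ:ℤ) → ξ i = η ((τ:ℤ)+1-i) := by
    refine fun i hi => Int.le_induction (motive := fun i _ => i ≤ (τ:ℤ) → ξ i = η ((τ:ℤ)+1-i)) ?_ ?_ i hi
    · intro _
      have : (τ:ℤ)+1-1 = (τ:ℤ) := by ring
      rw [this]; exact hbase
    · intro i hi ih hi1
      have e1 : ξ i = a i + 1/ξ (i+1) := hxirec i hi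
      have hτi : 1 ≤ (τ:ℤ) - i := by omega
      have e2 : η ((τ:ℤ)+1-i) = a ((τ:ℤ)-i) + 1/η ((τ:ℤ)-i) := by
        have h := hetarec ((τ:ℤ)-i) hτi
        have : (τ:ℤ) - i + 1 = (τ:ℤ)+1-i := by ring
        rwa [this] at h
      have e3 : ξ i = (a ((τ:ℤ)-i) : ℝ) + 1/η ((τ:ℤ)-i) := by
        rw [ih (by omega), e2]
      have := cfAux_floor_eq (hxigt (i+1) (by omega)) (hetagt ((τ:ℤ)-i) hτi) e1 e3
      have i5 : (τ:ℤ)+1-(i+1) = (τ:ℤ)-i := by ring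
      rw [i5]; exact this
  have hPQsym : ∀ i : ℤ, 1 ≤ i → i ≤ (τ:ℤ) → P i = P ((τ:ℤ)+1-i) ∧ Q i = Q ((τ:ℤ)-i) := by
    intro i hi hiτ
    have h := hsym i hi hiτ
    rw [hξ, hη] at h
    have i6 : (τ:ℤ)+1-i-1 = (τ:ℤ)-i := by ring
    rw [i6, add_comm s ((P ((τ:ℤ)+1-i) : ℝ))] at h
    exact cfAux_irr_eq hirr
      (by have := hQpos i (by omega); omega)
      (by have := hQpos ((τ:ℤ)-i) (by omega); omega) h
  -- the key integer identities for convergents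
  have hAB : ∀ m : ℤ, 0 ≤ m →
      (p (m-1) + P (m+1) * q (m-1) = Q m * q m ∧
       P (m+1) * p (m-1) + (N:ℤ) * q (m-1) = Q m * p m) := by
    refine fun m hm => Int.le_induction (motive := fun m _ =>
      p (m-1) + P (m+1) * q (m-1) = Q m * q m ∧
      P (m+1) * p (m-1) + (N:ℤ) * q (m-1) = Q m * p m) ?_ ?_ m hm
    · constructor
      · norm_num [hp1, hq1, hQ0, hq0]
      · norm_num [hp1, hq1, hQ0, hp0, hP1]
    · intro m hm ⟨ih1, ih2⟩
      have hQm0 : Q m ≠ 0 := by have := hQpos m hm; omega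
      have e1 : P (m+1+1) = a (m+1) * Q (m+1) - P (m+1) := hPrec (m+1) (by omega)
      have e2 : Q (m+1) * Q m = (N:ℤ) - P (m+1)^2 := hQrec m hm
      have e3 : p (m+1) = a (m+1) * p m + p (m-1) := by
        have h := hprec (m+1) (by omega)
        have i1 : m+1-1 = m := by ring
        have i2 : m+1-2 = m-1 := by ring
        rwa [i1, i2] at h
      have e4 : q (m+1) = a (m+1) * q m + q (m-1) := by
        have h := hqrec (m+1) (by omega)
        have i1 : m+1-1 = m := by ring
        have i2 : m+1-2 = m-1 := by ring
        rwa [i1, i2] at h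
      have i3 : m+1-1 = m := by ring
      rw [i3]
      constructor
      · refine mul_left_cancel₀ hQm0 ?_
        rw [e1, e4]
        linear_combination P (m+1) * ih1 - ih2 - q (m-1) * e2
      · refine mul_left_cancel₀ hQm0 ?_
        rw [e1, e3]
        linear_combination P (m+1) * ih2 - (N:ℤ) * ih1 - p (m-1) * e2
  -- the product formula for convergents
  have prodform : ∀ n : ℕ,
      ((p ((n:ℤ)-1) : ℝ) + (q ((n:ℤ)-1) : ℝ) * s)
        = (Q (n:ℤ) : ℝ) * ∏ i ∈ Finset.range n, ξ ((i:ℤ)+1) := by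
    intro n
    induction n with
    | zero => norm_num [hp1, hq1, hQ0]
    | succ n ih =>
      have hQn0 : (0:ℝ) < (Q (n:ℤ) : ℝ) := hQR (n:ℤ) (by positivity)
      have hQn10 : (0:ℝ) < (Q ((n:ℤ)+1) : ℝ) := hQR ((n:ℤ)+1) (by positivity)
      obtain ⟨cA, cB⟩ := hAB (n:ℤ) (by positivity)
      have castA : ((p ((n:ℤ)-1) : ℝ)) + (P ((n:ℤ)+1) : ℝ) * (q ((n:ℤ)-1) : ℝ)
          = (Q (n:ℤ) : ℝ) * (q (n:ℤ) : ℝ) := by exact_mod_cast congrArg (fun z : ℤ => (z:ℝ)) cA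
      have castB : ((P ((n:ℤ)+1) : ℝ)) * (p ((n:ℤ)-1) : ℝ) + (N:ℝ) * (q ((n:ℤ)-1) : ℝ)
          = (Q (n:ℤ) : ℝ) * (p (n:ℤ) : ℝ) := by exact_mod_cast congrArg (fun z : ℤ => (z:ℝ)) cB
      have hxiQ : ξ ((n:ℤ)+1) * (Q ((n:ℤ)+1) : ℝ) = (P ((n:ℤ)+1) : ℝ) + s := by
        rw [hξ, div_mul_cancel₀ _ (ne_of_gt hQn10)]
      have hkey : (Q (n:ℤ) : ℝ) * ((p (n:ℤ) : ℝ) + (q (n:ℤ) : ℝ) * s)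
          = ((P ((n:ℤ)+1) : ℝ) + s) * ((p ((n:ℤ)-1) : ℝ) + (q ((n:ℤ)-1) : ℝ) * s) := by
        linear_combination -castB - s * castA - (q ((n:ℤ)-1) : ℝ) * hs2
      have hind : (((n+1:ℕ):ℤ)) = (n:ℤ)+1 := by push_cast; ring
      have i4 : (n:ℤ)+1-1 = (n:ℤ) := by ring
      have hprod : (∏ i ∈ Finset.range n, ξ ((i:ℤ)+1))
          = ((p ((n:ℤ)-1) : ℝ) + (q ((n:ℤ)-1) : ℝ) * s) / (Q (n:ℤ):ℝ) := by
        rw [ih, mul_div_cancel_left₀ _ (ne_of_gt hQn0)]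
      have final : (Q ((n:ℤ)+1):ℝ) *
          ((((p ((n:ℤ)-1):ℝ) + (q ((n:ℤ)-1):ℝ)*s) / (Q (n:ℤ):ℝ)) * ξ ((n:ℤ)+1))
          = (p (n:ℤ):ℝ) + (q (n:ℤ):ℝ)*s := by
        rw [hξ]
        field_simp
        linear_combination (-1:ℝ) * hkey
      rw [hind, i4, Finset.prod_range_succ, hprod, final]
  -- final assembly
  obtain ⟨k, hk⟩ := hτodd
  have hk2 : (τ - 1)/2 = k := by omega
  set F : ℕ → ℝ := fun i => Real.log (ξ ((i:ℤ)+1)) with hF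
  have hFval : ∀ i : ℕ, F i = Real.log (ξ ((i:ℤ)+1)) := fun _ => rfl
  have hxipos : ∀ m : ℤ, 1 ≤ m → (0:ℝ) < ξ m := fun m hm => lt_trans one_pos (hxigt m hm)
  -- the target value equals the product over a double period
  have htv : (p (2 * (τ:ℤ) - 1) : ℝ) + (q (2 * (τ:ℤ) - 1) : ℝ) * s
      = ∏ i ∈ Finset.range (2*τ), ξ ((i:ℤ)+1) := by
    have h := prodform (2*τ)
    have i1 : ((2*τ:ℕ):ℤ) = 2*(τ:ℤ) := by push_cast; ring
    rw [i1] at h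
    have hQ2τ : Q (2*(τ:ℤ)) = 1 := by
      have i2 : 2*(τ:ℤ) = (τ:ℤ) + (τ:ℤ) := by ring
      rw [i2, (hPQper (τ:ℤ) hτZ).2, hQτ]
    rw [hQ2τ] at h
    rw [Int.cast_one, one_mul] at h
    exact h
  have hlogtv : Real.log ((p (2 * (τ:ℤ) - 1) : ℝ) + (q (2 * (τ:ℤ) - 1) : ℝ) * s)
      = ∑ i ∈ Finset.range (2*τ), F i := by
    rw [htv, Real.log_prod]
    intro i _
    exact ne_of_gt (hxipos ((i:ℤ)+1) (by omega))
  -- double period sum is twice the single period sum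
  have hdouble : ∑ i ∈ Finset.range (2*τ), F i = 2 * ∑ i ∈ Finset.range τ, F i := by
    have i1 : 2*τ = τ + τ := by ring
    rw [i1, Finset.sum_range_add]
    have : ∀ i ∈ Finset.range τ, F (τ + i) = F i := by
      intro i _
      rw [hFval, hFval]
      have i2 : ((τ + i:ℕ):ℤ)+1 = ((i:ℤ)+1) + (τ:ℤ) := by push_cast; ring
      rw [i2, hxiper ((i:ℤ)+1) (by omega)]
    rw [Finset.sum_congr rfl this]
    ring
  -- pairing in a single period
  have hpairlog : ∀ i : ℕ, i < k →
      F i + F (2*k - i) = Real.log ((s + (P ((i:ℤ)+1) : ℝ))/(s - (P ((i:ℤ)+1) : ℝ))) := by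
    intro i hik
    have hj1 : (1:ℤ) ≤ (i:ℤ)+1 := by omega
    have hjτ : (i:ℤ)+1 ≤ (τ:ℤ) := by omega
    have hj'1 : (1:ℤ) ≤ (τ:ℤ)+1-((i:ℤ)+1) := by omega
    have hj'τ : (τ:ℤ)+1-((i:ℤ)+1) ≤ (τ:ℤ) := by omega
    obtain ⟨hPs, hQs⟩ := hPQsym ((i:ℤ)+1) hj1 hjτ
    obtain ⟨_, hQs'⟩ := hPQsym ((τ:ℤ)+1-((i:ℤ)+1)) hj'1 hj'τ
    have i3 : (τ:ℤ) - ((τ:ℤ)+1-((i:ℤ)+1)) = (i:ℤ) := by ring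
    rw [i3] at hQs'
    have i4 : ((2*k - i:ℕ):ℤ)+1 = (τ:ℤ)+1-((i:ℤ)+1) := by omega
    rw [hFval, hFval, i4]
    obtain ⟨_, _, iPs, idn⟩ := main ((i:ℤ)+1) hj1
    have hsub : (0:ℝ) < s - (P ((i:ℤ)+1) : ℝ) := by linarith
    have hadd : (0:ℝ) < s + (P ((i:ℤ)+1) : ℝ) := by
      have := hnumpos ((i:ℤ)+1) hj1; linarith
    have hQi : (0:ℝ) < (Q ((i:ℤ)+1) : ℝ) := hQR ((i:ℤ)+1) (by omega)
    have hQi' : (0:ℝ) < (Q ((i:ℤ)) : ℝ) := hQR (i:ℤ) (by omega)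
    have hQQ : (Q ((i:ℤ)+1) : ℝ) * (Q (i:ℤ) : ℝ)
        = (s - (P ((i:ℤ)+1):ℝ)) * (s + (P ((i:ℤ)+1):ℝ)) := hQrecR (i:ℤ) (by omega)
    have hximul : ξ ((i:ℤ)+1) * ξ ((τ:ℤ)+1-((i:ℤ)+1))
        = (s + (P ((i:ℤ)+1) : ℝ))/(s - (P ((i:ℤ)+1) : ℝ)) := by
      rw [hξ, hξ, ← hPs, hQs']
      rw [div_mul_div_comm, div_eq_div_iff (by positivity) (ne_of_gt hsub)]
      linear_combination (-((P ((i:ℤ)+1):ℝ) + s)) * hQQ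
    rw [← hximul, Real.log_mul (ne_of_gt (hxipos _ hj1)) (ne_of_gt (hxipos _ hj'1))]
  -- single period sum
  have hsingle : ∑ i ∈ Finset.range τ, F i
      = (∑ i ∈ Finset.range k, Real.log ((s + (P ((i:ℤ)+1) : ℝ))/(s - (P ((i:ℤ)+1) : ℝ)))) + F k := by
    have i1 : τ = k + (k+1) := by omega
    rw [i1, Finset.sum_range_add, Finset.sum_range_succ']
    have hrefl : ∑ i ∈ Finset.range k, F (k + (i+1)) = ∑ i ∈ Finset.range k, F (2*k - i) := by
      rw [← Finset.sum_range_reflect (fun i => F (k + (i+1))) k]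
      apply Finset.sum_congr rfl
      intro i hi
      have hik : i < k := Finset.mem_range.mp hi
      congr 1
      omega
    rw [hrefl]
    have : ∑ i ∈ Finset.range k, F i + (∑ i ∈ Finset.range k, F (2*k - i) + F (k+0))
        = ∑ i ∈ Finset.range k, (F i + F (2*k - i)) + F k := by
      rw [Finset.sum_add_distrib]; norm_num; ring
    rw [this, Finset.sum_congr rfl (fun i hi => hpairlog i (Finset.mem_range.mp hi))]
  -- putting it together
  rw [hk2, hlogtv, hdouble, hsingle]
  have hkle : (1:ℤ) ≤ (k:ℤ)+1 := by omega
  have hkτ : (k:ℤ)+1 ≤ (τ:ℤ) := by omega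
  have hFk0 : 0 ≤ F k := Real.log_nonneg (by exact_mod_cast (hxigt ((k:ℤ)+1) hkle).le)
  have hFkb : F k ≤ Real.log (2*s) := by
    rw [hFval]
    exact Real.log_le_log (hxipos ((k:ℤ)+1) hkle) (hxiub ((k:ℤ)+1) hkle).le
  have hlog4N : Real.log (4*(N:ℝ)) = 2 * Real.log (2*s) := by
    have h4 : (4:ℝ)*(N:ℝ) = (2*s)^2 := by nlinarith [hs2]
    rw [h4, sq, Real.log_mul (by positivity) (by positivity)]
    ring
  have hinner : (∑ i ∈ Finset.range k,
        (1/2 : ℝ) * Real.log ((s + (P ((i:ℤ)+1) : ℝ))/(s - (P ((i:ℤ)+1) : ℝ))))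
      - (1/4 : ℝ) * (2 * ((∑ i ∈ Finset.range k,
          Real.log ((s + (P ((i:ℤ)+1) : ℝ))/(s - (P ((i:ℤ)+1) : ℝ)))) + F k))
      = -((1/2) * F k) := by
    rw [← Finset.mul_sum]
    ring
  rw [hinner, abs_neg, abs_of_nonneg (by linarith [hFk0] : (0:ℝ) ≤ (1/2) * F k), hlog4N]
  linarith [hFkb]
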